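/- In the lamplighter group L₂ = ℤ₂ ≀ ℤ with generating set {a, t}, for any j with 0 < j < n, the word t^{n+j} a t^{−2n} a t^{n} is not geodesic: the element it represents has word length 4n − j + 2 < 4n + j + 2, realized by the word t^{−n+j} a t^{2n} a t^{−n}. -/

import Mathlib

open scoped commutatorElement

/-- Relators for the lamplighter group `L_m = ℤ_m ≀ ℤ` in the wreath product
presentation `⟨a, t | a^m, [t^i a t^{-i}, t^j a t^{-j}]⟩`, where `a` is encoded
by `true` and `t` by `false`. -/
def lampRels (m : ℕ) : Set (FreeGroup Bool) :=
  {FreeGroup.of true ^ m} ∪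
  {r | ∃ i j : ℤ,
    r = ⁅FreeGroup.of false ^ i * FreeGroup.of true * FreeGroup.of false ^ (-i),
        FreeGroup.of false ^ j * FreeGroup.of true * FreeGroup.of false ^ (-j)⁆}

/-- The lamplighter group `L_m = ℤ_m ≀ ℤ`. -/
abbrev Lamp (m : ℕ) := PresentedGroup (lampRels m)

/-- The generator `a` of `L_m`. -/
noncomputable def la (m : ℕ) : Lamp m := PresentedGroup.of true

/-- The generator `t` of `L_m`. -/
noncomputable def lt (m : ℕ) : Lamp m := PresentedGroup.of false

/-- Word length of `g` with respect to the generating set `S` (and inverses):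
the least length of a list of elements of `S ∪ S⁻¹` with product `g`. -/
noncomputable def wordLength {G : Type*} [Group G] (S : Set G) (g : G) : ℕ :=
  sInf {n | ∃ l : List G, (∀ x ∈ l, x ∈ S ∨ x⁻¹ ∈ S) ∧ l.length = n ∧ l.prod = g}

/-! ### Concrete model -/

noncomputable def lshift (k : ℤ) (f : ℤ →₀ ZMod 2) : ℤ →₀ ZMod 2 :=
  Finsupp.mapDomain (· + k) f

lemma lshift_zero_fun (f : ℤ →₀ ZMod 2) : lshift 0 f = f := by
  have h : (fun x : ℤ => x + 0) = id := funext fun x => add_zero x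
  rw [lshift, h, Finsupp.mapDomain_id]

lemma lshift_lshift (k l : ℤ) (f : ℤ →₀ ZMod 2) :
    lshift k (lshift l f) = lshift (l + k) f := by
  unfold lshift
  rw [← Finsupp.mapDomain_comp]
  congr 1
  funext x; simp [Function.comp, add_assoc]

lemma lshift_add (k : ℤ) (f g : ℤ →₀ ZMod 2) :
    lshift k (f + g) = lshift k f + lshift k g := Finsupp.mapDomain_add

lemma lshift_zero (k : ℤ) : lshift k (0 : ℤ →₀ ZMod 2) = 0 :=
  Finsupp.mapDomain_zero

lemma finsupp_add_self (f : ℤ →₀ ZMod 2) : f + f = 0 := by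
  ext x
  simp only [Finsupp.add_apply, Finsupp.coe_zero, Pi.zero_apply]
  exact CharTwo.add_self_eq_zero _

lemma lshift_single (k i : ℤ) (c : ZMod 2) :
    lshift k (Finsupp.single i c) = Finsupp.single (i + k) c :=
  Finsupp.mapDomain_single

@[ext] structure LL where
  f : ℤ →₀ ZMod 2
  k : ℤ

noncomputable instance : Mul LL := ⟨fun x y => ⟨x.f + lshift x.k y.f, x.k + y.k⟩⟩
noncomputable instance : One LL := ⟨⟨0, 0⟩⟩
noncomputable instance : Inv LL := ⟨fun x => ⟨lshift (-x.k) x.f, -x.k⟩⟩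

lemma LL.mul_def (x y : LL) : x * y = ⟨x.f + lshift x.k y.f, x.k + y.k⟩ := rfl
lemma LL.one_def : (1 : LL) = ⟨0, 0⟩ := rfl
lemma LL.inv_def (x : LL) : x⁻¹ = ⟨lshift (-x.k) x.f, -x.k⟩ := rfl

noncomputable instance : Group LL where
  mul_assoc x y z := by
    rw [LL.mul_def, LL.mul_def, LL.mul_def, LL.mul_def]
    ext : 1 <;> dsimp only
    · simp only [lshift_add, lshift_lshift, add_assoc]
      rw [add_comm y.k x.k]
    · simp [add_assoc]
  one_mul x := by
    rw [LL.one_def, LL.mul_def]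
    ext : 1 <;> simp [lshift_zero_fun]
  mul_one x := by
    rw [LL.one_def, LL.mul_def]
    ext : 1 <;> simp [lshift_zero]
  inv_mul_cancel x := by
    rw [LL.inv_def, LL.mul_def, LL.one_def]
    ext : 1 <;> dsimp only
    · exact finsupp_add_self _
    · simp

noncomputable def gA : LL := ⟨Finsupp.single 0 1, 0⟩
noncomputable def gT : LL := ⟨0, 1⟩

lemma gT_npow (m : ℕ) : gT ^ m = ⟨0, m⟩ := by
  induction m with
  | zero => rw [pow_zero, LL.one_def]; norm_num
  | succ p ih =>
      rw [pow_succ, ih, LL.mul_def]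
      ext : 1 <;> dsimp only
      · simp only [gT, lshift_zero, add_zero]
      · simp only [gT]; push_cast; ring

lemma gT_zpow (m : ℤ) : gT ^ m = ⟨0, m⟩ := by
  cases m with
  | ofNat p => simpa using gT_npow p
  | negSucc p =>
      rw [zpow_negSucc, gT_npow, LL.inv_def]
      ext : 1 <;> dsimp only
      · exact lshift_zero _
      · simp [Int.negSucc_eq]

lemma gA_mul_gA : gA * gA = 1 := by
  rw [LL.mul_def, LL.one_def, gA]
  ext : 1 <;> dsimp only
  · rw [lshift_single, zero_add]
    exact finsupp_add_self _
  · simp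

lemma lamp_conj (i : ℤ) : gT ^ i * gA * gT ^ (-i) = ⟨Finsupp.single i 1, 0⟩ := by
  rw [gT_zpow, gT_zpow, gA, LL.mul_def, LL.mul_def]
  ext : 1 <;> dsimp only
  · simp only [lshift_single, lshift_zero, zero_add, add_zero]
  · simp

noncomputable def genMap : Bool → LL
  | true => gA
  | false => gT

@[simp] lemma genMap_true : genMap true = gA := rfl
@[simp] lemma genMap_false : genMap false = gT := rfl

lemma lamp_rels_hold : ∀ r ∈ lampRels 2,
    (FreeGroup.lift genMap) r = 1 := by
  intro r hr
  rcases hr with h | ⟨i, j, rfl⟩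
  · rw [Set.mem_singleton_iff] at h
    subst h
    rw [map_pow, FreeGroup.lift_apply_of, genMap_true, pow_two, gA_mul_gA]
  · simp only [map_commutatorElement, map_mul, map_zpow, FreeGroup.lift_apply_of,
      genMap_true, genMap_false]
    rw [commutatorElement_eq_one_iff_mul_comm, lamp_conj, lamp_conj,
      LL.mul_def, LL.mul_def]
    ext : 1 <;> dsimp only
    simp only [lshift_zero_fun]
    rw [add_comm]

noncomputable def lampPi : Lamp 2 →* LL := PresentedGroup.toGroup lamp_rels_hold

lemma lampPi_a : lampPi (la 2) = gA := PresentedGroup.toGroup.of _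
lemma lampPi_t : lampPi (lt 2) = gT := PresentedGroup.toGroup.of _

/-! ### Relations in the lamplighter group -/

noncomputable def lampPr : FreeGroup Bool →* Lamp 2 :=
  QuotientGroup.mk' (Subgroup.normalClosure (lampRels 2))

lemma lampPr_of_true : lampPr (FreeGroup.of true) = la 2 := rfl
lemma lampPr_of_false : lampPr (FreeGroup.of false) = lt 2 := rfl

lemma lamp_rel_one {r : FreeGroup Bool} (hr : r ∈ lampRels 2) :
    lampPr r = 1 :=
  (QuotientGroup.eq_one_iff r).mpr (Subgroup.subset_normalClosure hr)

lemma la_sq : la 2 * la 2 = 1 := by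
  have h := lamp_rel_one (Or.inl rfl)
  rw [map_pow, lampPr_of_true, pow_two] at h
  exact h

lemma lamp_comm (i j : ℤ) :
    (lt 2 ^ i * la 2 * lt 2 ^ (-i)) * (lt 2 ^ j * la 2 * lt 2 ^ (-j)) =
    (lt 2 ^ j * la 2 * lt 2 ^ (-j)) * (lt 2 ^ i * la 2 * lt 2 ^ (-i)) := by
  rw [← commutatorElement_eq_one_iff_mul_comm]
  have h := lamp_rel_one (Or.inr ⟨i, j, rfl⟩)
  rw [map_commutatorElement] at h
  simp only [map_mul, map_zpow, lampPr_of_true, lampPr_of_false] at h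
  exact h

/-! ### The norm -/

noncomputable def nR (f : ℤ →₀ ZMod 2) : ℤ :=
  (insert 0 f.support).max' (Finset.insert_nonempty _ _)
noncomputable def nL (f : ℤ →₀ ZMod 2) : ℤ :=
  (insert 0 f.support).min' (Finset.insert_nonempty _ _)

lemma nL_nonpos (f : ℤ →₀ ZMod 2) : nL f ≤ 0 :=
  Finset.min'_le _ _ (Finset.mem_insert_self _ _)
lemma nR_nonneg (f : ℤ →₀ ZMod 2) : 0 ≤ nR f :=
  Finset.le_max' _ _ (Finset.mem_insert_self _ _)

noncomputable def LN (g : LL) : ℤ :=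
  g.f.support.card + 2 * (max (nR g.f) g.k - min (nL g.f) g.k) - g.k.natAbs

lemma LN_one : LN 1 = 0 := by
  simp [LN, LL.one_def, nR, nL]

lemma ZMod2_ne_zero {u : ZMod 2} (h : u ≠ 0) : u = 1 := by
  revert h
  revert u
  decide

lemma support_add_single (f : ℤ →₀ ZMod 2) (k : ℤ) :
    (f + Finsupp.single k 1).support =
      if k ∈ f.support then f.support.erase k else insert k f.support := by
  split_ifs with h
  · ext x
    rcases eq_or_ne x k with rfl | hx
    · have hfk : f x = 1 := ZMod2_ne_zero (Finsupp.mem_support_iff.mp h)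
      simp [Finsupp.mem_support_iff, Finsupp.add_apply, Finsupp.single_apply, hfk]
      decide
    · simp [Finsupp.mem_support_iff, Finsupp.add_apply, Finsupp.single_apply,
        hx, Ne.symm hx]
  · ext x
    rcases eq_or_ne x k with rfl | hx
    · have hfk : f x = 0 := by
        by_contra h0; exact h (Finsupp.mem_support_iff.mpr h0)
      simp [Finsupp.mem_support_iff, Finsupp.add_apply, Finsupp.single_apply, hfk]
    · simp [Finsupp.mem_support_iff, Finsupp.add_apply, Finsupp.single_apply,
        hx, Ne.symm hx]

lemma LN_step_T (g : LL) : LN (g * gT) ≤ LN g + 1 := by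
  have h1 : g * gT = ⟨g.f, g.k + 1⟩ := by
    rw [LL.mul_def]
    ext : 1 <;> dsimp only
    · rw [gT]; dsimp only; rw [lshift_zero, add_zero]
    · rfl
  rw [h1, LN, LN]
  have hL := nL_nonpos g.f
  have hR := nR_nonneg g.f
  dsimp only
  simp only [max_def, min_def]
  split_ifs <;> omega

lemma LN_step_Tinv (g : LL) : LN (g * gT⁻¹) ≤ LN g + 1 := by
  have h1 : g * gT⁻¹ = ⟨g.f, g.k - 1⟩ := by
    rw [gT, LL.inv_def, LL.mul_def]
    ext : 1 <;> dsimp only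
    · rw [lshift_zero, lshift_zero, add_zero]
    · ring
  rw [h1, LN, LN]
  have hL := nL_nonpos g.f
  have hR := nR_nonneg g.f
  dsimp only
  simp only [max_def, min_def]
  split_ifs <;> omega

lemma LN_step_A (g : LL) : LN (g * gA) ≤ LN g + 1 := by
  have h1 : g * gA = ⟨g.f + Finsupp.single g.k 1, g.k⟩ := by
    rw [gA, LL.mul_def]
    ext : 1 <;> dsimp only
    · rw [lshift_single, zero_add]
    · rw [add_zero]
  rw [h1, LN, LN]
  dsimp only
  have hsupp := support_add_single g.f g.k
  by_cases h : g.k ∈ g.f.support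
  · rw [if_pos h] at hsupp
    have hcard : (g.f + Finsupp.single g.k 1).support.card = g.f.support.card - 1 := by
      rw [hsupp]; exact Finset.card_erase_of_mem h
    have hcard' : 1 ≤ g.f.support.card := Finset.card_pos.mpr ⟨_, h⟩
    have hRle : nR (g.f + Finsupp.single g.k 1) ≤ nR g.f := by
      apply Finset.max'_subset
      rw [hsupp]
      exact Finset.insert_subset_insert _ (Finset.erase_subset _ _)
    have hLle : nL g.f ≤ nL (g.f + Finsupp.single g.k 1) := by
      apply Finset.min'_subset
      rw [hsupp]
      exact Finset.insert_subset_insert _ (Finset.erase_subset _ _)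
    have h2 : max (nR (g.f + Finsupp.single g.k 1)) g.k ≤ max (nR g.f) g.k :=
      max_le_max hRle le_rfl
    have h3 : min (nL g.f) g.k ≤ min (nL (g.f + Finsupp.single g.k 1)) g.k :=
      min_le_min hLle le_rfl
    omega
  · rw [if_neg h] at hsupp
    have hcard : (g.f + Finsupp.single g.k 1).support.card = g.f.support.card + 1 := by
      rw [hsupp]; exact Finset.card_insert_of_notMem h
    have hReq : nR (g.f + Finsupp.single g.k 1) = max (nR g.f) g.k := by
      rw [nR, nR]
      simp only [hsupp, Finset.insert_comm]
      rw [Finset.max'_insert, max_comm]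
    have hLeq : nL (g.f + Finsupp.single g.k 1) = min (nL g.f) g.k := by
      rw [nL, nL]
      simp only [hsupp, Finset.insert_comm]
      rw [Finset.min'_insert, min_comm]
    rw [hReq, hLeq, max_assoc, max_self, min_assoc, min_self]
    omega

/-! ### Lower bound via the norm -/

lemma gA_inv : gA⁻¹ = gA := inv_eq_of_mul_eq_one_right gA_mul_gA

lemma LN_le_length (l : List (Lamp 2))
    (hl : ∀ x ∈ l, x ∈ ({la 2, lt 2} : Set (Lamp 2)) ∨
      x⁻¹ ∈ ({la 2, lt 2} : Set (Lamp 2))) :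
    LN (lampPi l.prod) ≤ l.length := by
  induction l using List.reverseRecOn with
  | nil => simp [LN_one]
  | append_singleton l x ih =>
      have ih' := ih (fun y hy => hl y (by simp [hy]))
      have hx := hl x (by simp)
      have hpi : lampPi x = gA ∨ lampPi x = gT ∨ lampPi x = gT⁻¹ := by
        rcases hx with (rfl | rfl) | h
        · exact Or.inl lampPi_a
        · exact Or.inr (Or.inl lampPi_t)
        · rcases h with h | h
          · left
            have : x = (la 2)⁻¹ := by rw [← h, inv_inv]
            rw [this, map_inv, lampPi_a, gA_inv]
          · right; right
            have : x = (lt 2)⁻¹ := by rw [← h, inv_inv]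
            rw [this, map_inv, lampPi_t]
      rw [List.prod_append, List.prod_singleton, map_mul, List.length_append,
        List.length_singleton]
      push_cast
      rcases hpi with h | h | h <;> rw [h]
      · exact le_trans (LN_step_A _) (by omega)
      · exact le_trans (LN_step_T _) (by omega)
      · exact le_trans (LN_step_Tinv _) (by omega)

/-! ### The element and its image -/

lemma lamp_elem_image (i q jz : ℤ) :
    lampPi ((lt 2 ^ i * la 2 * lt 2 ^ (-i)) * (lt 2 ^ q * la 2 * lt 2 ^ (-q)) *
      lt 2 ^ jz) = ⟨Finsupp.single i 1 + Finsupp.single q 1, jz⟩ := by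
  simp only [map_mul, map_zpow, lampPi_a, lampPi_t]
  rw [lamp_conj, lamp_conj, gT_zpow, LL.mul_def, LL.mul_def]
  ext : 1 <;> dsimp only
  · rw [lshift_zero_fun, lshift_zero, add_zero]
  · omega

lemma LN_two_lamps (i q jz : ℤ) (hq : q < 0) (hi : 0 ≤ i) (hjz : 0 ≤ jz)
    (hji : jz ≤ i) (hqj : q ≤ jz) :
    LN ⟨Finsupp.single i 1 + Finsupp.single q 1, jz⟩ = 2 + 2 * (i - q) - jz := by
  have hne : i ≠ q := by omega
  have h1 : (1 : ZMod 2) ≠ 0 := by decide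
  have hsupp : (Finsupp.single i 1 + Finsupp.single q 1 : ℤ →₀ ZMod 2).support
      = {i, q} := by
    rw [Finsupp.support_add_eq]
    · rw [Finsupp.support_single_ne_zero _ h1, Finsupp.support_single_ne_zero _ h1]
      rfl
    · rw [Finsupp.support_single_ne_zero _ h1, Finsupp.support_single_ne_zero _ h1]
      simp [hne, Ne.symm hne]
  have hcard : (Finsupp.single i 1 + Finsupp.single q 1 : ℤ →₀ ZMod 2).support.card
      = 2 := by
    rw [hsupp]
    rw [Finset.card_insert_of_notMem (by simp [hne]), Finset.card_singleton]
  have hR : nR (Finsupp.single i 1 + Finsupp.single q 1) = i := by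
    rw [nR]
    simp only [hsupp]
    apply le_antisymm
    · apply Finset.max'_le
      intro y hy
      simp only [Finset.mem_insert, Finset.mem_singleton] at hy
      rcases hy with rfl | rfl | rfl <;> omega
    · apply Finset.le_max'
      simp
  have hL : nL (Finsupp.single i 1 + Finsupp.single q 1) = q := by
    rw [nL]
    simp only [hsupp]
    apply le_antisymm
    · apply Finset.min'_le
      simp
    · apply Finset.le_min'
      intro y hy
      simp only [Finset.mem_insert, Finset.mem_singleton] at hy
      rcases hy with rfl | rfl | rfl <;> omega
  rw [LN]
  dsimp only
  rw [hcard, hR, hL]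
  have h2 : max i jz = i := max_eq_left hji
  have h3 : min q jz = q := min_eq_left hqj
  rw [h2, h3]
  omega

/-! ### Products of the two words -/

lemma w1_prod_eq (n j : ℕ) :
    (List.replicate (n + j) (lt 2) ++ [la 2] ++ List.replicate (2 * n) (lt 2)⁻¹ ++
      [la 2] ++ List.replicate n (lt 2)).prod =
    (lt 2 ^ ((n : ℤ) + j) * la 2 * lt 2 ^ (-((n : ℤ) + j))) *
      (lt 2 ^ ((j : ℤ) - n) * la 2 * lt 2 ^ (-((j : ℤ) - n))) * lt 2 ^ (j : ℤ) := by
  rw [List.prod_append, List.prod_append, List.prod_append, List.prod_append,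
    List.prod_replicate, List.prod_replicate, List.prod_replicate,
    List.prod_singleton]
  rw [inv_pow, ← zpow_natCast (lt 2) (n + j), ← zpow_natCast (lt 2) (2 * n),
    ← zpow_natCast (lt 2) n, ← zpow_neg]
  push_cast
  group

lemma w2_prod_eq (n j : ℕ) (hjn : j ≤ n) :
    (List.replicate (n - j) (lt 2)⁻¹ ++ [la 2] ++ List.replicate (2 * n) (lt 2) ++
      [la 2] ++ List.replicate n (lt 2)⁻¹).prod =
    (lt 2 ^ ((j : ℤ) - n) * la 2 * lt 2 ^ (-((j : ℤ) - n))) *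
      (lt 2 ^ ((n : ℤ) + j) * la 2 * lt 2 ^ (-((n : ℤ) + j))) * lt 2 ^ (j : ℤ) := by
  rw [List.prod_append, List.prod_append, List.prod_append, List.prod_append,
    List.prod_replicate, List.prod_replicate, List.prod_replicate,
    List.prod_singleton]
  rw [inv_pow, inv_pow, ← zpow_natCast (lt 2) (n - j), ← zpow_natCast (lt 2) (2 * n),
    ← zpow_natCast (lt 2) n, ← zpow_neg, ← zpow_neg]
  rw [Nat.cast_sub hjn]
  push_cast
  group

/-- In `L₂` with generating set `{a, t}`, for `0 < j < n` the word
`tⁿ⁺ʲ a t⁻²ⁿ a tⁿ` is not geodesic: the element it represents has word length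
`4n − j + 2 < 4n + j + 2`, realized by the word `t⁻ⁿ⁺ʲ a t²ⁿ a t⁻ⁿ`. -/
theorem lamplighter_pumped_word_not_geodesic (n j : ℕ) (hj : 0 < j) (hjn : j < n) :
    letI S : Set (Lamp 2) := {la 2, lt 2}
    letI a := la 2
    letI t := lt 2
    letI w1 := List.replicate (n + j) t ++ [a] ++ List.replicate (2 * n) t⁻¹ ++ [a] ++
      List.replicate n t
    letI w2 := List.replicate (n - j) t⁻¹ ++ [a] ++ List.replicate (2 * n) t ++ [a] ++
      List.replicate n t⁻¹
    letI e := w1.prod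
    wordLength S e = 4 * n - j + 2 ∧
    w2.prod = e ∧ w2.length = 4 * n - j + 2 ∧
    w1.length = 4 * n + j + 2 ∧
    4 * n - j + 2 < 4 * n + j + 2 ∧
    w1.length ≠ wordLength S e := by
  have hjn' : j ≤ n := le_of_lt hjn
  set S : Set (Lamp 2) := {la 2, lt 2} with hS
  set w1 : List (Lamp 2) := List.replicate (n + j) (lt 2) ++ [la 2] ++
    List.replicate (2 * n) (lt 2)⁻¹ ++ [la 2] ++ List.replicate n (lt 2) with hw1def
  set w2 : List (Lamp 2) := List.replicate (n - j) (lt 2)⁻¹ ++ [la 2] ++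
    List.replicate (2 * n) (lt 2) ++ [la 2] ++ List.replicate n (lt 2)⁻¹ with hw2def
  -- products
  have he2 : w2.prod = w1.prod := by
    rw [hw1def, hw2def, w1_prod_eq n j, w2_prod_eq n j hjn',
      lamp_comm ((j : ℤ) - n) ((n : ℤ) + j)]
  -- lengths
  have hl1 : w1.length = 4 * n + j + 2 := by
    simp only [hw1def, List.length_append, List.length_replicate,
      List.length_singleton]
    omega
  have hl2 : w2.length = 4 * n - j + 2 := by
    simp only [hw2def, List.length_append, List.length_replicate,
      List.length_singleton]
    omega
  -- image and norm
  have himg : lampPi w1.prod =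
      ⟨Finsupp.single ((n : ℤ) + j) 1 + Finsupp.single ((j : ℤ) - n) 1, (j : ℤ)⟩ := by
    rw [hw1def, w1_prod_eq n j]
    exact lamp_elem_image _ _ _
  have hLN : LN (lampPi w1.prod) = 2 + 2 * (((n : ℤ) + j) - ((j : ℤ) - n)) - j := by
    rw [himg]
    apply LN_two_lamps <;> push_cast <;> omega
  -- membership conditions
  have hmem2 : ∀ x ∈ w2, x ∈ S ∨ x⁻¹ ∈ S := by
    intro x hx
    rw [hw2def] at hx
    simp only [List.mem_append, List.mem_replicate, List.mem_singleton] at hx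
    rcases hx with ((((⟨-, rfl⟩ | rfl) | ⟨-, rfl⟩) | rfl) | ⟨-, rfl⟩)
    · right; rw [inv_inv]; right; rfl
    · left; left; rfl
    · left; right; rfl
    · left; left; rfl
    · right; rw [inv_inv]; right; rfl
  -- the word length
  rw [wordLength]
  set WS : Set ℕ := {m | ∃ l : List (Lamp 2),
    (∀ x ∈ l, x ∈ S ∨ x⁻¹ ∈ S) ∧ l.length = m ∧ l.prod = w1.prod} with hWS
  have hub : sInf WS ≤ 4 * n - j + 2 :=
    Nat.sInf_le ⟨w2, hmem2, hl2, he2⟩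
  have hne : WS.Nonempty := ⟨w2.length, w2, hmem2, rfl, he2⟩
  obtain ⟨l, hlmem, hllen, hlprod⟩ := Nat.sInf_mem hne
  have hlow : LN (lampPi w1.prod) ≤ (l.length : ℤ) := by
    rw [← hlprod]
    exact LN_le_length l hlmem
  rw [hLN, hllen] at hlow
  have hinf : sInf WS = 4 * n - j + 2 := by omega
  refine ⟨hinf, he2, hl2, hl1, by omega, ?_⟩
  rw [hinf, hl1]
  omega
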